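/- For β_1, β_2 > 1, the inclusion S_{β_1} ⊆ S_{β_2} holds if and only if β_1 ≤ β_2. -/

import Mathlib

open Set MeasureTheory Filter Topology

noncomputable section

/-- The β-transformation `x ↦ βx mod 1`. -/
def fbeta (β : ℝ) (x : ℝ) : ℝ := Int.fract (β * x)

/-- The digit sequence `d(x, β)`, given by `d(x,β)_n = [β f_β^n(x)]`. -/
def bdigit (β x : ℝ) (n : ℕ) : ℕ := (⌊β * (fbeta β)^[n] x⌋).toNat

/-- The β-shift `S_β`: the closure (product topology) of the set of digit sequences of
points of `[0,1)`. -/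
def betaShift (β : ℝ) : Set (ℕ → ℕ) :=
  closure {d | ∃ x ∈ Set.Ico (0 : ℝ) 1, d = bdigit β x}

/-- `π_β ((i_k)) = ∑ i_k β^{-(k+1)}`. -/
def piBeta (β : ℝ) (d : ℕ → ℕ) : ℝ := ∑' k : ℕ, (d k : ℝ) / β ^ (k + 1)

/-- The finite word `w` occurs in the sequence `d` at position `m`. -/
def occursAt (w : List ℕ) (d : ℕ → ℕ) (m : ℕ) : Prop :=
  ∀ i < w.length, d (m + i) = w.getD i 0

/-- The finite word `w` occurs somewhere in the sequence `d`. -/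
def occursIn (w : List ℕ) (d : ℕ → ℕ) : Prop := ∃ m, occursAt w d m

/-- `w ∈ S_β^*`: the finite word `w` occurs in some sequence of `S_β`. -/
def wordIn (β : ℝ) (w : List ℕ) : Prop := ∃ d ∈ betaShift β, occursIn w d

/-- The finite word `w` occurs in some sequence of the set `S`. -/
def wordInSet (S : Set (ℕ → ℕ)) (w : List ℕ) : Prop := ∃ d ∈ S, occursIn w d

/-- The cylinder `[w]` in `S_β`. -/
def cylinder (β : ℝ) (w : List ℕ) : Set (ℕ → ℕ) :=
  {d ∈ betaShift β | ∀ i < w.length, d i = w.getD i 0}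

/-- A subshift of finite type inside `S_β`: the subset of `S_β` determined by a finite
set of forbidden words. -/
def IsSFTin (β : ℝ) (S : Set (ℕ → ℕ)) : Prop :=
  ∃ F : Finset (List ℕ), S = {d ∈ betaShift β | ∀ w ∈ F, ¬ occursIn w d}

/-- `S_β` is a subshift of finite type iff `d(1,β)` has only finitely many nonzero digits. -/
def betaShiftFiniteType (β : ℝ) : Prop := ∃ N, ∀ n ≥ N, bdigit β 1 n = 0

/-- The length (Lebesgue measure) of a set of reals. -/
def len (I : Set ℝ) : ℝ := (volume I).toReal

/-- `I` is a (possibly degenerate) closed interval. -/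
def IsClosedInterval (I : Set ℝ) : Prop := ∃ a b : ℝ, a ≤ b ∧ I = Set.Icc a b

/-- A legal move in Schmidt's game with ratio `ρ`: a closed subinterval `cur` of `prev`
with `|cur| ≥ ρ|prev|`. -/
def MoveLegal (ρ : ℝ) (prev cur : Set ℝ) : Prop :=
  IsClosedInterval cur ∧ cur ⊆ prev ∧ ρ * len prev ≤ len cur

/-- White has a winning strategy in Schmidt's `(α,γ)`-game on `[0,1]` with target set `E`:
there is a strategy (a function from the history of Black's moves to White's next move)
such that, for every sequence of moves of Black starting with a closed interval
`B 0 ⊆ [0,1]`, White's moves are legal as long as Black's have been, and if Black always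
moves legally then `⋂ k, W k ⊆ E`. -/
def WinsSchmidt (α γ : ℝ) (E : Set ℝ) : Prop :=
  ∃ strat : List (Set ℝ) → Set ℝ,
    ∀ B : ℕ → Set ℝ,
      (IsClosedInterval (B 0) ∧ B 0 ⊆ Set.Icc (0 : ℝ) 1) →
      (∀ n : ℕ,
        (∀ k < n, MoveLegal γ (strat (List.ofFn fun i : Fin (k + 1) => B i)) (B (k + 1))) →
        MoveLegal α (B n) (strat (List.ofFn fun i : Fin (n + 1) => B i))) ∧
      ((∀ k : ℕ, MoveLegal γ (strat (List.ofFn fun i : Fin (k + 1) => B i)) (B (k + 1))) →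
        (⋂ k : ℕ, strat (List.ofFn fun i : Fin (k + 1) => B i)) ⊆ E)

/-- `E` is `α`-winning: it is `(α,γ)`-winning for every `γ ∈ (0,1)`. -/
def AlphaWinning (α : ℝ) (E : Set ℝ) : Prop :=
  ∀ γ ∈ Set.Ioo (0 : ℝ) 1, WinsSchmidt α γ E

/-- A similarity transformation of `ℝ`. -/
def IsSimilarityMap (f : ℝ → ℝ) : Prop := ∃ a b : ℝ, a ≠ 0 ∧ ∀ x, f x = a * x + b

/-- Falconer's class `𝒢^s`: `G_δ` sets `F` with `dim_H (⋂ i, f_i(F)) ≥ s` for every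
sequence of similarity transformations `(f_i)`. -/
def FalconerClass (s : ℝ) (F : Set ℝ) : Prop :=
  IsGδ F ∧ ∀ f : ℕ → ℝ → ℝ, (∀ i, IsSimilarityMap (f i)) →
    ENNReal.ofReal s ≤ dimH (⋂ i, f i '' F)

/-- The suffix of `u` of length `m+1` coincides with the first `m+1` digits of `d(1,β)`. -/
def tailMatch (β : ℝ) (u : List ℕ) (m : ℕ) : Prop :=
  m < u.length ∧ ∀ t ≤ m, u.getD (u.length - 1 - m + t) 0 = bdigit β 1 t
lemma fbeta_mem (β x : ℝ) : fbeta β x ∈ Set.Ico (0:ℝ) 1 :=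
  ⟨Int.fract_nonneg _, Int.fract_lt_one _⟩

lemma iter_mem {β x : ℝ} (hx : x ∈ Set.Ico (0:ℝ) 1) (n : ℕ) :
    (fbeta β)^[n] x ∈ Set.Ico (0:ℝ) 1 := by
  cases n with
  | zero => exact hx
  | succ n => rw [Function.iterate_succ_apply']; exact fbeta_mem _ _

lemma bdigit_cast {β x : ℝ} (hβ : 0 < β) (hx : x ∈ Set.Ico (0:ℝ) 1) (n : ℕ) :
    (bdigit β x n : ℝ) = ((⌊β * (fbeta β)^[n] x⌋ : ℤ) : ℝ) := by
  have h0 : (0:ℝ) ≤ β * (fbeta β)^[n] x := mul_nonneg hβ.le (iter_mem hx n).1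
  have h1 : (0:ℤ) ≤ ⌊β * (fbeta β)^[n] x⌋ := Int.floor_nonneg.mpr h0
  rw [bdigit]
  exact_mod_cast congrArg (fun z : ℤ => (z : ℝ)) (Int.toNat_of_nonneg h1)

lemma bdigit_step {β x : ℝ} (hβ : 0 < β) (hx : x ∈ Set.Ico (0:ℝ) 1) (n : ℕ) :
    β * (fbeta β)^[n] x = (bdigit β x n : ℝ) + (fbeta β)^[n+1] x := by
  rw [Function.iterate_succ_apply', fbeta, bdigit_cast hβ hx n]
  rw [Int.fract]; ring

lemma partial_sum {β x : ℝ} (hβ : 1 < β) (hx : x ∈ Set.Ico (0:ℝ) 1) (n : ℕ) :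
    ∑ k ∈ Finset.range n, (bdigit β x k : ℝ) / β ^ (k+1)
      = x - (fbeta β)^[n] x / β ^ n := by
  have hβ0 : (0:ℝ) < β := one_pos.trans hβ
  induction n with
  | zero => simp
  | succ n ih =>
    rw [Finset.sum_range_succ, ih]
    have hstep := bdigit_step hβ0 hx n
    have h1 : (fbeta β)^[n+1] x = β * (fbeta β)^[n] x - (bdigit β x n : ℝ) := by
      linarith
    rw [h1]
    have hb : (β:ℝ) ≠ 0 := ne_of_gt hβ0
    field_simp
    ring

lemma bdigit_shift (β x : ℝ) (j k : ℕ) :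
    bdigit β x (j + k) = bdigit β ((fbeta β)^[j] x) k := by
  rw [bdigit, bdigit, add_comm, Function.iterate_add_apply]

lemma construct {β : ℝ} (hβ : 1 < β) (w : ℕ → ℕ) (n : ℕ)
    (H : ∀ j ≤ n, ∑ k ∈ Finset.range (n - j), (w (j+k) : ℝ) / β ^ (k+1) < 1) :
    ∃ y ∈ Set.Ico (0:ℝ) 1, ∀ j < n, bdigit β y j = w j := by
  have hβ0 : (0:ℝ) < β := one_pos.trans hβ
  set Y : ℕ → ℝ := fun j => ∑ k ∈ Finset.range (n - j), (w (j+k) : ℝ) / β ^ (k+1) with hY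
  have hYnonneg : ∀ j, 0 ≤ Y j := fun j => Finset.sum_nonneg (fun k _ => by positivity)
  have hYmem : ∀ j ≤ n, Y j ∈ Set.Ico (0:ℝ) 1 := fun j hj => ⟨hYnonneg j, H j hj⟩
  have hstep : ∀ j < n, β * Y j = (w j : ℝ) + Y (j+1) := by
    intro j hj
    have hm : n - j = (n - (j+1)) + 1 := by omega
    have hsplit : Y j = (∑ k ∈ Finset.range (n - (j+1)), (w (j+1+k) : ℝ) / β ^ (k+2))
        + (w j : ℝ)/β := by
      rw [hY]
      simp only
      rw [hm, Finset.sum_range_succ']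
      congr 1
      · refine Finset.sum_congr rfl (fun k _ => ?_)
        have h : j + (k+1) = j+1+k := by omega
        rw [h]
      · simp
    rw [hsplit, mul_add, Finset.mul_sum]
    have : ∀ k ∈ Finset.range (n - (j+1)),
        β * ((w (j+1+k) : ℝ) / β ^ (k+2)) = (w (j+1+k) : ℝ) / β ^ (k+1) := by
      intro k _
      rw [pow_succ]
      field_simp
    rw [Finset.sum_congr rfl this]
    have hb : (β:ℝ) ≠ 0 := ne_of_gt hβ0
    field_simp
    ring
  have hiter : ∀ j, j ≤ n → (fbeta β)^[j] (Y 0) = Y j := by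
    intro j
    induction j with
    | zero => intro _; rfl
    | succ j ih =>
      intro hj
      have hj' : j < n := by omega
      rw [Function.iterate_succ_apply', ih (by omega), fbeta, hstep j hj']
      have hc : ((w j : ℝ)) = ((w j : ℤ) : ℝ) := by push_cast; ring
      rw [hc, Int.fract_intCast_add, Int.fract_eq_self.mpr ⟨hYnonneg _, (hYmem (j+1) hj').2⟩]
  refine ⟨Y 0, hYmem 0 (Nat.zero_le _), ?_⟩
  intro j hj
  rw [bdigit, hiter j hj.le, hstep j hj]
  have hc : ((w j : ℝ)) = ((w j : ℤ) : ℝ) := by push_cast; ring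
  rw [hc, Int.floor_intCast_add, Int.floor_eq_zero_iff.mpr (hYmem (j+1) hj), add_zero,
    Int.toNat_natCast]

lemma prefix_admissible {β₁ β₂ x : ℝ} (h₁ : 1 < β₁) (hle : β₁ ≤ β₂)
    (hx : x ∈ Set.Ico (0:ℝ) 1) (n : ℕ) :
    ∃ y ∈ Set.Ico (0:ℝ) 1, ∀ j < n, bdigit β₂ y j = bdigit β₁ x j := by
  apply construct (lt_of_lt_of_le h₁ hle)
  intro j hj
  have h1pos : (0:ℝ) < β₁ := one_pos.trans h₁
  calc ∑ k ∈ Finset.range (n-j), (bdigit β₁ x (j+k) : ℝ)/β₂^(k+1)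
      ≤ ∑ k ∈ Finset.range (n-j), (bdigit β₁ x (j+k) : ℝ)/β₁^(k+1) := by
        refine Finset.sum_le_sum (fun k _ => ?_)
        gcongr
    _ = ∑ k ∈ Finset.range (n-j), (bdigit β₁ ((fbeta β₁)^[j] x) k : ℝ)/β₁^(k+1) := by
        refine Finset.sum_congr rfl (fun k _ => ?_)
        rw [bdigit_shift]
    _ = (fbeta β₁)^[j] x - (fbeta β₁)^[n-j] ((fbeta β₁)^[j] x) / β₁^(n-j) :=
        partial_sum h₁ (iter_mem hx j) (n-j)
    _ < 1 := by
        have h1 := (iter_mem (β := β₁) hx j).2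
        have h2 := (iter_mem (β := β₁) (iter_mem (β := β₁) hx j) (n-j)).1
        have hp : (0:ℝ) < β₁^(n-j) := pow_pos h1pos _
        have : 0 ≤ (fbeta β₁)^[n-j] ((fbeta β₁)^[j] x) / β₁^(n-j) := div_nonneg h2 hp.le
        linarith

lemma mem_betaShift_of_prefixes {β : ℝ} (d : ℕ → ℕ)
    (h : ∀ n, ∃ y ∈ Set.Ico (0:ℝ) 1, ∀ j < n, bdigit β y j = d j) :
    d ∈ betaShift β := by
  choose y hy hagree using h
  refine mem_closure_of_tendsto (f := fun n => bdigit β (y n)) (b := atTop) ?_ ?_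
  · rw [tendsto_pi_nhds]
    intro k
    refine Filter.Tendsto.congr' ?_ (tendsto_const_nhds (x := d k))
    filter_upwards [eventually_ge_atTop (k+1)] with n hn
    exact (hagree n k (by omega)).symm
  · exact Filter.Eventually.of_forall fun n => ⟨y n, hy n, rfl⟩

lemma prefix_of_mem_betaShift {β : ℝ} {d : ℕ → ℕ} (hd : d ∈ betaShift β) (n : ℕ) :
    ∃ y ∈ Set.Ico (0:ℝ) 1, ∀ j < n, bdigit β y j = d j := by
  have hEq : {s : ℕ → ℕ | ∀ j < n, s j = d j}
      = Set.pi (↑(Finset.range n)) (fun j => {d j}) := by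
    ext s; simp [Set.mem_pi]
  have hU : IsOpen {s : ℕ → ℕ | ∀ j < n, s j = d j} := by
    rw [hEq]
    exact isOpen_set_pi (Finset.range n).finite_toSet (fun j _ => isOpen_discrete _)
  have hdU : d ∈ {s : ℕ → ℕ | ∀ j < n, s j = d j} := fun j _ => rfl
  obtain ⟨s, hsU, hs⟩ := mem_closure_iff.mp hd _ hU hdU
  obtain ⟨y, hy, rfl⟩ := hs
  exact ⟨y, hy, hsU⟩

/-- `S_{β₁} ⊆ S_{β₂}` if and only if `β₁ ≤ β₂`. -/
theorem betaShift_subset_iff (β₁ β₂ : ℝ) (h₁ : 1 < β₁) (h₂ : 1 < β₂) :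
    betaShift β₁ ⊆ betaShift β₂ ↔ β₁ ≤ β₂ := by
  constructor
  · intro hsub
    by_contra hlt
    push_neg at hlt
    -- hlt : β₂ < β₁
    have h1pos : (0:ℝ) < β₁ := one_pos.trans h₁
    have h2pos : (0:ℝ) < β₂ := one_pos.trans h₂
    obtain ⟨δ, hδdef⟩ : ∃ δ : ℝ, δ = 1/β₂ - 1/β₁ := ⟨_, rfl⟩
    have hδ : 0 < δ := by
      have : 1/β₁ < 1/β₂ := one_div_lt_one_div_of_lt h2pos hlt
      linarith
    obtain ⟨x, hxdef⟩ : ∃ x : ℝ, x = max (1/β₁) (1 - δ/2) := ⟨_, rfl⟩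
    have hx : x ∈ Set.Ico (0:ℝ) 1 := by
      constructor
      · exact le_trans (by positivity) (hxdef ▸ le_max_left _ _)
      · rw [hxdef]; apply max_lt
        · rw [div_lt_one h1pos]; exact h₁
        · linarith
    have hx1 : 1 - δ/2 ≤ x := hxdef ▸ le_max_right _ _
    have hd0 : (1:ℝ) ≤ (bdigit β₁ x 0 : ℝ) := by
      rw [bdigit_cast h1pos hx 0]
      have hb : (1:ℝ) ≤ β₁ * x := by
        have h' : 1/β₁ ≤ x := hxdef ▸ le_max_left _ _
        calc (1:ℝ) = β₁ * (1/β₁) := by field_simp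
          _ ≤ β₁ * x := by gcongr
      have : (1:ℤ) ≤ ⌊β₁ * (fbeta β₁)^[0] x⌋ := by
        apply Int.le_floor.mpr
        simpa using hb
      exact_mod_cast this
    obtain ⟨m, hm⟩ := pow_unbounded_of_one_lt (2/δ) h₁
    set n : ℕ := max m 1 with hndef
    have hn1 : 1 ≤ n := le_max_right _ _
    have hnpow : 2/δ < β₁ ^ n := by
      calc 2/δ < β₁ ^ m := hm
        _ ≤ β₁ ^ n := pow_le_pow_right₀ h₁.le (le_max_left _ _)
    have hninv : 1/β₁^n ≤ δ/2 := by
      rw [div_le_div_iff₀ (pow_pos h1pos n) (by norm_num)]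
      rw [div_lt_iff₀ hδ] at hnpow
      linarith
    -- lower bound on the β₂-sum of the first n digits
    have key : (1:ℝ) ≤ ∑ k ∈ Finset.range n, (bdigit β₁ x k : ℝ)/β₂^(k+1) := by
      have hsplit : ∑ k ∈ Finset.range n, (bdigit β₁ x k : ℝ)/β₂^(k+1)
          = (∑ k ∈ Finset.range n, (bdigit β₁ x k : ℝ)/β₁^(k+1))
            + ∑ k ∈ Finset.range n,
                (bdigit β₁ x k : ℝ) * (1/β₂^(k+1) - 1/β₁^(k+1)) := by
        rw [← Finset.sum_add_distrib]
        refine Finset.sum_congr rfl (fun k _ => ?_)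
        field_simp
        ring
      have hterm : ∀ k ∈ Finset.range n,
          0 ≤ (bdigit β₁ x k : ℝ) * (1/β₂^(k+1) - 1/β₁^(k+1)) := by
        intro k _
        apply mul_nonneg (Nat.cast_nonneg _)
        have : β₂^(k+1) ≤ β₁^(k+1) := pow_le_pow_left₀ h2pos.le hlt.le _
        have h1 : 1/β₁^(k+1) ≤ 1/β₂^(k+1) := by
          apply one_div_le_one_div_of_le (pow_pos h2pos _) this
        linarith
      have hsingle : δ ≤ ∑ k ∈ Finset.range n,
          (bdigit β₁ x k : ℝ) * (1/β₂^(k+1) - 1/β₁^(k+1)) := by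
        have h0mem : 0 ∈ Finset.range n := Finset.mem_range.mpr (by omega)
        have := Finset.single_le_sum hterm h0mem
        have hδ0 : δ ≤ (bdigit β₁ x 0 : ℝ) * (1/β₂^(0+1) - 1/β₁^(0+1)) := by
          have h0' : (0:ℝ) ≤ 1/β₂ - 1/β₁ := by linarith
          have hfac : 0 ≤ 1/β₂^(0+1) - 1/β₁^(0+1) := by simpa using h0'
          calc δ = 1 * (1/β₂^(0+1) - 1/β₁^(0+1)) := by rw [hδdef]; norm_num
            _ ≤ (bdigit β₁ x 0 : ℝ) * (1/β₂^(0+1) - 1/β₁^(0+1)) := by gcongr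
        linarith
      have hfirst : x - 1/β₁^n ≤ ∑ k ∈ Finset.range n, (bdigit β₁ x k : ℝ)/β₁^(k+1) := by
        rw [partial_sum h₁ hx n]
        have hT := (iter_mem (β := β₁) hx n).2
        have hTnn := (iter_mem (β := β₁) hx n).1
        have hp : (0:ℝ) < β₁^n := pow_pos h1pos n
        have : (fbeta β₁)^[n] x / β₁^n ≤ 1/β₁^n := by gcongr
        linarith
      rw [hsplit]
      have : (1:ℝ) - δ/2 - δ/2 + δ ≤ (x - 1/β₁^n) + δ := by linarith
      linarith
    -- d(x,β₁) ∈ S_{β₂}, extract a point y of [0,1) with the same first n digits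
    have hmem : bdigit β₁ x ∈ betaShift β₂ := hsub (subset_closure ⟨x, hx, rfl⟩)
    obtain ⟨y, hy, hagree⟩ := prefix_of_mem_betaShift hmem n
    have hps := partial_sum h₂ hy n
    have hsum_eq : ∑ k ∈ Finset.range n, (bdigit β₂ y k : ℝ)/β₂^(k+1)
        = ∑ k ∈ Finset.range n, (bdigit β₁ x k : ℝ)/β₂^(k+1) := by
      refine Finset.sum_congr rfl (fun k hk => ?_)
      rw [hagree k (Finset.mem_range.mp hk)]
    have hTnn := (iter_mem (β := β₂) hy n).1
    have hp : (0:ℝ) < β₂^n := pow_pos h2pos n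
    have hub : ∑ k ∈ Finset.range n, (bdigit β₂ y k : ℝ)/β₂^(k+1) < 1 := by
      rw [hps]
      have : 0 ≤ (fbeta β₂)^[n] y / β₂^n := div_nonneg hTnn hp.le
      linarith [hy.2]
    rw [hsum_eq] at hub
    linarith
  · intro hle
    have hbase : {d | ∃ x ∈ Set.Ico (0:ℝ) 1, d = bdigit β₁ x} ⊆ betaShift β₂ := by
      rintro d ⟨x, hx, rfl⟩
      exact mem_betaShift_of_prefixes _ (prefix_admissible h₁ hle hx)
    exact closure_minimal hbase isClosed_closure
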